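/- Let E be a row-finite directed graph, {p_v, s_e} a Cuntz–Krieger E-family, and let v ≠ w be vertices with a directed path from v to w in E. Then there exist non-negative integers (m_u)_{u ∈ E^0}, all but finitely many zero, such that p_v is Murray–von Neumann equivalent (in matrices over the generated C*-algebra) to p_w ⊕ ⨁_{u ∈ E^0} m_u · p_u. Moreover m_v can be chosen with m_v ≥ |{e ∈ E^1 : s(e) = r(e) = v}|. -/

import Mathlib

/-- A directed graph: vertices, edges, source and range maps. -/
structure DGraph where
  V : Type
  E : Type
  s : E → V
  r : E → V

namespace DGraph

/-- A vertex is regular if it emits finitely many, but at least one, edge. -/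
def Regular (G : DGraph) (v : G.V) : Prop :=
  {e : G.E | G.s e = v}.Finite ∧ {e : G.E | G.s e = v}.Nonempty

end DGraph

/-- A Cuntz–Krieger `G`-family in a C*-algebra `A`: mutually orthogonal projections
`P v` and partial isometries `S e` satisfying the Cuntz–Krieger relations
(CK0)–(CK3).  The inequality `S e (S e)* ≤ P (s e)` is encoded algebraically as
`P (s e) * (S e (S e)*) = S e (S e)*`. -/
structure IsCKFamily (G : DGraph) {A : Type*} [NonUnitalCStarAlgebra A]
    (P : G.V → A) (S : G.E → A) : Prop where
  proj_idem : ∀ v : G.V, P v * P v = P v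
  proj_star : ∀ v : G.V, star (P v) = P v
  orth : ∀ v w : G.V, v ≠ w → P v * P w = 0
  ck0 : ∀ e f : G.E, e ≠ f → star (S e) * S f = 0
  ck1 : ∀ e : G.E, star (S e) * S e = P (G.r e)
  ck2 : ∀ e : G.E, P (G.s e) * (S e * star (S e)) = S e * star (S e)
  ck3 : ∀ v : G.V, G.Regular v → P v = ∑ᶠ e ∈ {e : G.E | G.s e = v}, S e * star (S e)

open scoped Matrix Classical

/-- One-step reachability: there is an edge from `v` to `w`. -/
def DGraph.Step (G : DGraph) (v w : G.V) : Prop := ∃ e : G.E, G.s e = v ∧ G.r e = w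

/-! ### Auxiliary counting lemmas -/

lemma ncard_subtype_eq {α : Type*} (p q : α → Prop) :
    {i : {a // p a} | q i.1}.ncard = {a | p a ∧ q a}.ncard := by
  have h : {a | p a ∧ q a} = Subtype.val '' {i : {a // p a} | q i.1} := by
    ext a
    constructor
    · rintro ⟨hp, hq⟩; exact ⟨⟨a, hp⟩, hq, rfl⟩
    · rintro ⟨⟨b, hb⟩, hq, rfl⟩; exact ⟨hb, hq⟩
  rw [h, Set.ncard_image_of_injective _ Subtype.val_injective]

lemma ncard_sum_eq {α β : Type*} [Finite α] [Finite β] (p : α ⊕ β → Prop) :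
    {k : α ⊕ β | p k}.ncard = {a | p (Sum.inl a)}.ncard + {b | p (Sum.inr b)}.ncard := by
  have h : {k : α ⊕ β | p k} = Sum.inl '' {a | p (Sum.inl a)} ∪ Sum.inr '' {b | p (Sum.inr b)} := by
    ext k; cases k <;> simp
  rw [h, Set.ncard_union_eq ?_ (Set.toFinite _) (Set.toFinite _),
    Set.ncard_image_of_injective _ Sum.inl_injective,
    Set.ncard_image_of_injective _ Sum.inr_injective]
  rw [Set.disjoint_left]
  rintro k ⟨a, -, rfl⟩ ⟨b, -, h⟩
  exact Sum.inl_ne_inr h.symm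

lemma ncard_comp_equiv {α β : Type*} (e : α ≃ β) (q : α → Prop) :
    {b : β | q (e.symm b)}.ncard = {a : α | q a}.ncard := by
  have h : {b : β | q (e.symm b)} = e '' {a : α | q a} := by
    ext b
    constructor
    · intro hb; exact ⟨e.symm b, hb, by simp⟩
    · rintro ⟨a, ha, rfl⟩; simpa using ha
  rw [h, Set.ncard_image_of_injective _ e.injective]

lemma mul_rw {A : Type*} [NonUnitalRing A] {a b c : A} (h : a * b = c) (z : A) :
    a * (b * z) = c * z := by rw [← mul_assoc, h]

section CK

variable {G : DGraph} {A : Type*} [NonUnitalCStarAlgebra A] {P : G.V → A} {S : G.E → A}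

lemma S_mul_P (hfam : IsCKFamily G P S) (e : G.E) : S e * P (G.r e) = S e := by
  set p := P (G.r e) with hp
  have h1 : star (S e) * S e = p := hfam.ck1 e
  have hps : star p = p := hfam.proj_star _
  have hpp : p * p = p := hfam.proj_idem _
  have key : star (S e * p - S e) * (S e * p - S e) = 0 := by
    have expand : star (S e * p - S e) * (S e * p - S e)
        = p * (star (S e) * S e) * p - p * (star (S e) * S e)
          - (star (S e) * S e) * p + star (S e) * S e := by
      simp only [star_sub, star_mul, hps]
      noncomm_ring
    rw [expand, h1, hpp, hpp]
    abel
  exact sub_eq_zero.mp ((CStarRing.star_mul_self_eq_zero_iff _).mp key)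

/-- The data of an MvN equivalence of `P v` with a finite diagonal of vertex
projections, with partial-isometry entries. -/
def IsRep (P : G.V → A) (v : G.V) {ι : Type} [Fintype ι] (d : ι → G.V) (x : ι → A) : Prop :=
  (∀ i, x i * star (x i) * x i = x i) ∧
  (∑ i, star (x i) * x i = P v) ∧
  (∀ i j, x i * star (x j) = if i = j then P (d i) else 0)

lemma IsRep.mul_P {ι : Type} [Fintype ι] {v : G.V} {d : ι → G.V} {x : ι → A}
    (h : IsRep P v d x) (i : ι) : x i * P v = x i := by
  obtain ⟨h1, h2, h3⟩ := h
  rw [← h2, Finset.mul_sum,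
    Finset.sum_eq_single i
      (fun j _ hj => by rw [← mul_assoc, h3 i j, if_neg (Ne.symm hj), zero_mul])
      (fun h => absurd (Finset.mem_univ i) h),
    ← mul_assoc]
  exact h1 i

/-- The basic one-step decomposition of `P v` over the edges leaving `v`. -/
lemma isRep_base (hfam : IsCKFamily G P S) (hrow : ∀ u : G.V, {e : G.E | G.s e = u}.Finite)
    (v : G.V) (hne : {e : G.E | G.s e = v}.Nonempty)
    [Fintype {e : G.E | G.s e = v}] :
    IsRep P v (fun i : {e : G.E | G.s e = v} => G.r i.1) (fun i => star (S i.1)) := by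
  have hSP : ∀ e : G.E, P (G.r e) * star (S e) = star (S e) := by
    intro e
    have := congrArg star (S_mul_P hfam e)
    simpa [star_mul, hfam.proj_star] using this
  refine ⟨?_, ?_, ?_⟩
  · intro i
    rw [star_star, hfam.ck1, hSP]
  · have hreg : G.Regular v := ⟨hrow v, hne⟩
    have h3 := hfam.ck3 v hreg
    rw [finsum_mem_eq_finite_toFinset_sum _ (hrow v)] at h3
    rw [Finset.sum_subtype ((hrow v).toFinset)
      (fun e => (hrow v).mem_toFinset) (fun e => S e * star (S e))] at h3
    simp only [star_star]
    exact h3.symm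
  · intro i j
    by_cases h : i = j
    · subst h; simp [star_star, hfam.ck1]
    · rw [star_star, if_neg h, hfam.ck0]
      exact fun he => h (Subtype.ext he)

/-- Splicing a representation of `P (d i₀)` into slot `i₀`. -/
lemma isRep_splice {ι ι' : Type} [Fintype ι] [Fintype ι']
    {v : G.V} {d : ι → G.V} {x : ι → A} (hx : IsRep P v d x) (i₀ : ι)
    {d' : ι' → G.V} {y : ι' → A} (hy : IsRep P (d i₀) d' y) :
    IsRep P v (Sum.elim (fun i : {i : ι // i ≠ i₀} => d i.1) d')
      (Sum.elim (fun i : {i : ι // i ≠ i₀} => x i.1) (fun j => y j * x i₀)) := by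
  obtain ⟨hx1, hx2, hx3⟩ := hx
  obtain ⟨hy1, hy2, hy3⟩ := hy
  have hxd : x i₀ * star (x i₀) = P (d i₀) := by simpa using hx3 i₀ i₀
  have hyd : ∀ j, y j * star (y j) = P (d' j) := by intro j; simpa using hy3 j j
  have hyP : ∀ j, y j * P (d i₀) = y j := IsRep.mul_P ⟨hy1, hy2, hy3⟩
  have hPs : star (P (d i₀)) = P (d i₀) := by
    rw [← hy2]
    simp [star_sum, star_mul]
  have hPy : ∀ j, P (d i₀) * star (y j) = star (y j) := by
    intro j
    have := congrArg star (hyP j)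
    simpa [star_mul, hPs] using this
  have hPdy : ∀ j, P (d' j) * y j = y j := by
    intro j
    rw [← hyd j]; exact hy1 j
  have hPx : P (d i₀) * x i₀ = x i₀ := by
    rw [← hxd]; exact hx1 i₀
  refine ⟨?_, ?_, ?_⟩
  · rintro (⟨i, hi⟩ | j)
    · exact hx1 i
    · show y j * x i₀ * star (y j * x i₀) * (y j * x i₀) = y j * x i₀
      simp only [star_mul, mul_assoc]
      rw [mul_rw hxd, mul_rw (hPy j), mul_rw (hyd j), mul_rw (hPdy j)]
  · rw [Fintype.sum_sum_type]
    simp only [Sum.elim_inl, Sum.elim_inr]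
    have hsecond : ∀ j : ι', star (y j * x i₀) * (y j * x i₀)
        = star (x i₀) * ((star (y j) * y j) * x i₀) := by
      intro j
      simp only [star_mul, mul_assoc]
    rw [Finset.sum_congr rfl (fun j _ => hsecond j), ← Finset.mul_sum, ← Finset.sum_mul,
      hy2, hPx]
    have hfirst : ∑ i : {i : ι // i ≠ i₀}, star (x i.1) * x i.1
        = ∑ i ∈ Finset.univ.erase i₀, star (x i) * x i :=
      (Finset.sum_subtype (Finset.univ.erase i₀) (fun i => by simp)
        (fun i => star (x i) * x i)).symm
    rw [hfirst, ← hx2]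
    exact Finset.sum_erase_add _ _ (Finset.mem_univ i₀)
  · rintro (⟨i, hi⟩ | j) (⟨k, hk⟩ | l)
    · show x i * star (x k) = _
      rw [hx3 i k]
      by_cases h : i = k
      · subst h; simp
      · rw [if_neg h, if_neg]
        intro hh
        exact h (congrArg Subtype.val (Sum.inl_injective hh))
    · show x i * star (y l * x i₀) = _
      rw [if_neg (by simp)]
      simp only [star_mul]
      rw [← mul_assoc, hx3 i i₀, if_neg hi, zero_mul]
    · show y j * x i₀ * star (x k) = _
      rw [if_neg (by simp)]
      rw [mul_assoc, hx3 i₀ k, if_neg (Ne.symm hk), mul_zero]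
    · simp only [Sum.elim_inr]
      simp only [star_mul, mul_assoc]
      rw [mul_rw hxd, hPy l, hy3 j l]
      by_cases h : j = l
      · subst h; simp
      · rw [if_neg h, if_neg (by simp [h])]

lemma isRep_toFin {ι : Type} {inst : Fintype ι} {v : G.V} {d : ι → G.V} {x : ι → A}
    (h : @IsRep G A _ P v ι inst d x) :
    ∃ (N : ℕ) (d' : Fin N → G.V) (x' : Fin N → A), IsRep P v d' x' ∧
      ∀ u : G.V, {i : Fin N | d' i = u}.ncard = {i : ι | d i = u}.ncard := by
  letI := inst
  obtain ⟨h1, h2, h3⟩ := h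
  let e := Fintype.equivFin ι
  refine ⟨Fintype.card ι, fun i => d (e.symm i), fun i => x (e.symm i),
    ⟨fun i => h1 _, ?_, ?_⟩, fun u => ncard_comp_equiv e (fun i => d i = u)⟩
  · rw [← h2]; exact Equiv.sum_comp e.symm (fun k => star (x k) * x k)
  · intro i j
    rw [h3]
    by_cases h' : i = j
    · subst h'; simp
    · rw [if_neg h', if_neg (fun hh => h' (e.symm.injective hh))]

lemma base_count (v : G.V) [Fintype {e : G.E | G.s e = v}] (u : G.V) :
    {i : {e : G.E | G.s e = v} | G.r i.1 = u}.ncard = {e : G.E | G.s e = v ∧ G.r e = u}.ncard :=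
  ncard_subtype_eq (fun e => G.s e = v) (fun e => G.r e = u)

lemma key_lemma (hfam : IsCKFamily G P S)
    (hrow : ∀ u : G.V, {e : G.E | G.s e = u}.Finite) (w : G.V) :
    ∀ v : G.V, Relation.TransGen G.Step v w →
    ∃ (N : ℕ) (d : Fin N → G.V) (x : Fin N → A),
      IsRep P v d x ∧ (∃ i, d i = w) ∧
      {e : G.E | G.s e = v ∧ G.r e = v}.ncard ≤ {i : Fin N | d i = v}.ncard := by
  intro v hpath
  induction hpath using Relation.TransGen.head_induction_on with
  | @single a h =>
    obtain ⟨e₀, h0, h1⟩ := h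
    letI : Fintype ↥{e : G.E | G.s e = a} := (hrow a).fintype
    have hb := isRep_base hfam hrow a ⟨e₀, h0⟩
    obtain ⟨N, d', x', hrep, hcount⟩ := isRep_toFin hb
    refine ⟨N, d', x', hrep, ?_, ?_⟩
    · have hpos : 0 < {i : Fin N | d' i = w}.ncard := by
        rw [hcount w, base_count]
        have hfin : {e : G.E | G.s e = a ∧ G.r e = w}.Finite :=
          (hrow a).subset (fun e he => he.1)
        exact (Set.ncard_pos hfin).mpr ⟨e₀, h0, h1⟩
      obtain ⟨i, hi⟩ := (Set.ncard_pos (Set.toFinite _)).mp hpos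
      exact ⟨i, hi⟩
    · rw [hcount a, base_count]
  | @head a c h' hp hQ =>
    obtain ⟨e₀, h0, h1⟩ := h'
    obtain ⟨N', d', x', hrep', hw', hloops'⟩ := hQ
    letI : Fintype ↥{e : G.E | G.s e = a} := (hrow a).fintype
    have hb := isRep_base hfam hrow a ⟨e₀, h0⟩
    have hrep'' : IsRep P (G.r (⟨e₀, h0⟩ : ↥{e : G.E | G.s e = a}).1) d' x' := by
      rw [h1]; exact hrep'
    have hsp := isRep_splice hb ⟨e₀, h0⟩ hrep''
    obtain ⟨N₂, d₂, x₂, hrep₂, hcount₂⟩ := isRep_toFin hsp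
    have hcc : ∀ u : G.V, {i : Fin N₂ | d₂ i = u}.ncard
        = {i : {i : ↥{e : G.E | G.s e = a} // i ≠ ⟨e₀, h0⟩} | G.r i.1.1 = u}.ncard
          + {j : Fin N' | d' j = u}.ncard := by
      intro u
      rw [hcount₂ u]
      exact ncard_sum_eq _
    refine ⟨N₂, d₂, x₂, hrep₂, ?_, ?_⟩
    · have hpos : 0 < {i : Fin N₂ | d₂ i = w}.ncard := by
        rw [hcc w]
        have h2 : 0 < {j : Fin N' | d' j = w}.ncard :=
          (Set.ncard_pos (Set.toFinite _)).mpr hw'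
        omega
      obtain ⟨i, hi⟩ := (Set.ncard_pos (Set.toFinite _)).mp hpos
      exact ⟨i, hi⟩
    · rw [hcc a]
      rcases eq_or_ne c a with hca | hca
      · subst hca
        exact le_trans hloops' (Nat.le_add_left _ _)
      · have hX : {i : {i : ↥{e : G.E | G.s e = a} // i ≠ ⟨e₀, h0⟩} | G.r i.1.1 = a}.ncard
            = {e : G.E | G.s e = a ∧ G.r e = a}.ncard := by
          rw [ncard_subtype_eq (fun i : ↥{e : G.E | G.s e = a} => i ≠ ⟨e₀, h0⟩)
            (fun i : ↥{e : G.E | G.s e = a} => G.r i.1 = a)]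
          have hs : {i : ↥{e : G.E | G.s e = a} | i ≠ ⟨e₀, h0⟩ ∧ G.r i.1 = a}
              = {i : ↥{e : G.E | G.s e = a} | G.r i.1 = a} := by
            ext i
            constructor
            · rintro ⟨-, h⟩; exact h
            · intro h
              refine ⟨fun he => hca ?_, h⟩
              rw [← h1]
              rw [he] at h
              exact h
          rw [hs, base_count]
        rw [hX]
        exact Nat.le_add_right _ _

end CK

/-- Let `G` be a row-finite graph, `{P v, S e}` a Cuntz–Krieger `G`-family, and `v ≠ w`
vertices with a directed path from `v` to `w`.  Then there is a finitely supported family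
of non-negative integers `m` with `m v` at least the number of loops based at `v`, such
that `P v` is Murray–von Neumann equivalent (in matrices over the algebra) to the
diagonal projection consisting of `P w` once together with `m u` copies of `P u` for
each vertex `u`. -/
theorem ck_proj_equiv_of_path {G : DGraph} {A : Type*} [NonUnitalCStarAlgebra A]
    (hrow : ∀ u : G.V, {e : G.E | G.s e = u}.Finite)
    {P : G.V → A} {S : G.E → A} (hfam : IsCKFamily G P S)
    (v w : G.V) (hvw : v ≠ w) (hpath : Relation.TransGen G.Step v w) :
    ∃ m : G.V →₀ ℕ,
      {e : G.E | G.s e = v ∧ G.r e = v}.ncard ≤ m v ∧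
      ∃ (N : ℕ) (d : Fin N → G.V),
        (∀ u : G.V, ({i : Fin N | d i = u}).ncard = (if u = w then 1 else 0) + m u) ∧
        ∃ x : Matrix (Fin N) (Fin 1) A,
          xᴴ * x = Matrix.of (fun _ _ => P v) ∧
          x * xᴴ = Matrix.diagonal (fun i : Fin N => P (d i)) := by
  obtain ⟨N, d, x, ⟨hpi, hsum, hdiag⟩, ⟨iw, hiw⟩, hloops⟩ := key_lemma hfam hrow w v hpath
  have hwpos : 0 < {i : Fin N | d i = w}.ncard :=
    (Set.ncard_pos (Set.toFinite _)).mpr ⟨iw, hiw⟩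
  set f : G.V → ℕ := fun u => {i : Fin N | d i = u}.ncard - (if u = w then 1 else 0) with hf
  have hsupp : (Function.support f).Finite := by
    apply (Set.finite_range d).subset
    intro u hu
    by_contra hr
    have hempty : {i : Fin N | d i = u} = ∅ := by
      ext i
      simp only [Set.mem_setOf_eq, Set.mem_empty_iff_false, iff_false]
      intro h
      exact hr ⟨i, h⟩
    apply hu
    simp [hf, hempty]
  have hcoe : ∀ u, Finsupp.ofSupportFinite f hsupp u = f u := fun u => rfl
  refine ⟨Finsupp.ofSupportFinite f hsupp, ?_, N, d, ?_, ?_⟩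
  · rw [hcoe v]
    simp only [hf]
    rw [if_neg hvw]
    omega
  · intro u
    rw [hcoe u]
    by_cases hu : u = w
    · subst hu
      simp only [hf, eq_self_iff_true, if_true]
      omega
    · simp only [hf]
      rw [if_neg hu]
      omega
  · refine ⟨Matrix.of (fun i (_ : Fin 1) => x i), ?_, ?_⟩
    · ext i j
      simp only [Matrix.mul_apply, Matrix.conjTranspose_apply, Matrix.of_apply]
      exact hsum
    · ext i j
      simp only [Matrix.mul_apply, Matrix.conjTranspose_apply, Matrix.of_apply,
        Fin.sum_univ_one]
      by_cases h : i = j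
      · subst h
        rw [Matrix.diagonal_apply_eq]
        simpa using hdiag i i
      · rw [Matrix.diagonal_apply_ne _ h]
        simpa [h] using hdiag i j
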